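/- arXiv:2509.21529 — 5 statements merged into one kernel-verified Lean document; each statement's English description precedes it below -/
import Mathlib

section
/- For every finite simple graph G, the maximum nullity of G is at most the zero forcing number of G, i.e., M(G) ≤ Z(G). -/
/-- One round of the zero forcing color change rule, where vertices in the
leak set `L` are not permitted to force. A blue vertex `u ∉ L` with exactly one
non-blue neighbor `v` turns `v` blue. -/
def zfStep {V : Type*} (G : SimpleGraph V) (L : Set V) (B : Set V) : Set V :=
  B ∪ {v | ∃ u ∈ B, u ∉ L ∧ G.Adj u v ∧ ∀ w, G.Adj u w → w ∉ B → w = v}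

/-- The set of vertices eventually colored blue starting from `B`, with leaks `L`. -/
def zfClosure {V : Type*} (G : SimpleGraph V) (L : Set V) (B : Set V) : Set V :=
  ⋃ k, (zfStep G L)^[k] B

/-- `B` is an `ℓ`-leaky forcing set: for every leak set of size at most `ℓ`,
starting with exactly `B` blue, eventually every vertex becomes blue. -/
def IsLeakyForcingSet {V : Type*} (G : SimpleGraph V) (ℓ : ℕ) (B : Set V) : Prop :=
  ∀ L : Set V, L.ncard ≤ ℓ → zfClosure G L B = Set.univ

/-- `B` is a zero forcing set (no leaks). -/
def IsZeroForcingSet {V : Type*} (G : SimpleGraph V) (B : Set V) : Prop :=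
  zfClosure G (∅ : Set V) B = Set.univ

/-- The zero forcing number `Z(G)`: minimum cardinality of a zero forcing set. -/
noncomputable def zfNumber {V : Type*} (G : SimpleGraph V) : ℕ :=
  sInf (Set.ncard '' {B : Set V | IsZeroForcingSet G B})

/-- The `ℓ`-leaky forcing number `Z_(ℓ)(G)`: minimum cardinality of an
`ℓ`-leaky forcing set. -/
noncomputable def leakyNumber {V : Type*} (G : SimpleGraph V) (ℓ : ℕ) : ℕ :=
  sInf (Set.ncard '' {B : Set V | IsLeakyForcingSet G ℓ B})

/-- `A` is a real symmetric matrix whose off-diagonal nonzero pattern is the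
adjacency of `G` (diagonal entries are unconstrained). -/
def CompatMatrix {V : Type*} [Fintype V] (G : SimpleGraph V) (A : Matrix V V ℝ) : Prop :=
  A.IsSymm ∧ ∀ i j : V, i ≠ j → (A i j ≠ 0 ↔ G.Adj i j)

/-- The minimum rank `mr(G)` of a graph. -/
noncomputable def minRank {V : Type*} [Fintype V] (G : SimpleGraph V) : ℕ :=
  sInf {r | ∃ A : Matrix V V ℝ, CompatMatrix G A ∧ A.rank = r}

/-- The maximum nullity `M(G)` of a graph, where the nullity of an `n × n`
matrix `A` is `n - rank A`. -/
noncomputable def maxNullity {V : Type*} [Fintype V] (G : SimpleGraph V) : ℕ :=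
  sSup {k | ∃ A : Matrix V V ℝ, CompatMatrix G A ∧ Fintype.card V - A.rank = k}

lemma step_vanish {V : Type*} [Fintype V] {G : SimpleGraph V} {A : Matrix V V ℝ}
    (hA : CompatMatrix G A) {x : V → ℝ} (hx : A.mulVec x = 0) {S : Set V}
    (hS : ∀ v ∈ S, x v = 0) : ∀ v ∈ zfStep G ∅ S, x v = 0 := by
  rintro v (hv | ⟨u, huS, -, hadj, huniq⟩)
  · exact hS v hv
  by_cases hvS : v ∈ S
  · exact hS v hvS
  have hu : A.mulVec x u = 0 := by rw [hx]; rfl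
  have hsum : ∑ w, A u w * x w = A u v * x v := by
    refine Finset.sum_eq_single v (fun w _ hw => ?_) (by simp)
    by_cases hwS : w ∈ S
    · simp [hS w hwS]
    have hwu : w ≠ u := fun h => hwS (h ▸ huS)
    have : ¬ G.Adj u w := fun h => hw (huniq w h hwS)
    have : A u w = 0 := by
      by_contra h
      exact this ((hA.2 u w (Ne.symm hwu)).mp h)
    simp [this]
  have hAuv : A u v ≠ 0 := (hA.2 u v (G.ne_of_adj hadj)).mpr hadj
  have : A u v * x v = 0 := by rw [← hsum]; simpa [Matrix.mulVec, dotProduct] using hu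
  exact (mul_eq_zero.mp this).resolve_left hAuv

lemma null_vanish {V : Type*} [Fintype V] {G : SimpleGraph V} {A : Matrix V V ℝ}
    (hA : CompatMatrix G A) {B : Set V} (hB : IsZeroForcingSet G B)
    {x : V → ℝ} (hx : A.mulVec x = 0) (h0 : ∀ b ∈ B, x b = 0) : x = 0 := by
  have hiter : ∀ k, ∀ v ∈ (zfStep G ∅)^[k] B, x v = 0 := by
    intro k
    induction k with
    | zero => simpa using h0
    | succ n ih =>
      rw [Function.iterate_succ_apply']
      exact step_vanish hA hx ih
  funext v
  have : v ∈ zfClosure G ∅ B := by rw [hB]; trivial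
  obtain ⟨k, hk⟩ := Set.mem_iUnion.mp this
  exact hiter k v hk

lemma nullity_le_ncard {V : Type*} [Fintype V] {G : SimpleGraph V} {A : Matrix V V ℝ}
    (hA : CompatMatrix G A) {B : Set V} (hB : IsZeroForcingSet G B) :
    Fintype.card V - A.rank ≤ B.ncard := by
  classical
  have hrk : Fintype.card V - A.rank
      = Module.finrank ℝ (LinearMap.ker A.mulVecLin) := by
    have := LinearMap.finrank_range_add_finrank_ker A.mulVecLin
    rw [Module.finrank_fintype_fun_eq_card] at this
    unfold Matrix.rank
    omega
  rw [hrk]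
  haveI : Fintype B := B.toFinite.fintype
  have hinj : Function.Injective
      ((LinearMap.funLeft ℝ ℝ (fun b : B => (b : V))) ∘ₗ
        (LinearMap.ker A.mulVecLin).subtype) := by
    rw [← LinearMap.ker_eq_bot, LinearMap.ker_eq_bot']
    rintro ⟨x, hx⟩ h
    have hx' : A.mulVec x = 0 := hx
    have h0 : ∀ b ∈ B, x b = 0 := fun b hb => congrFun h ⟨b, hb⟩
    exact Subtype.ext (null_vanish hA hB hx' h0)
  calc Module.finrank ℝ (LinearMap.ker A.mulVecLin)
      ≤ Module.finrank ℝ (B → ℝ) := LinearMap.finrank_le_finrank_of_injective hinj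
    _ = Fintype.card B := Module.finrank_fintype_fun_eq_card ℝ
    _ = B.ncard := (Set.ncard_eq_toFinset_card' B ▸ (Set.toFinset_card B).symm)

/-- For every finite simple graph `G`, `M(G) ≤ Z(G)`. -/
theorem maxNullity_le_zfNumber {V : Type*} [Fintype V] (G : SimpleGraph V) :
    maxNullity G ≤ zfNumber G := by
  apply csSup_le'
  rintro k ⟨A, hA, rfl⟩
  have hne : (Set.ncard '' {B : Set V | IsZeroForcingSet G B}).Nonempty := by
    refine ⟨(Set.univ : Set V).ncard, Set.univ, ?_, rfl⟩
    apply Set.eq_univ_of_univ_subset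
    intro v _
    exact Set.mem_iUnion.mpr ⟨0, trivial⟩
  obtain ⟨B, hB, hcard⟩ := Nat.sInf_mem hne
  rw [zfNumber, ← hcard]
  exact nullity_le_ncard hA hB
end

section
/- Let G be a finite simple graph and let ℓ ≥ 0 be an integer. A set B ⊆ V(G) is an ℓ-leaky forcing set of G if and only if B intersects every ℓ-leaky fort of G. -/
/-- An `ℓ`-leaky fort: a nonempty set `S` such that at most `ℓ` vertices
outside of `S` have exactly one neighbor in `S`. -/
def IsLeakyFort {V : Type*} (G : SimpleGraph V) (ℓ : ℕ) (S : Set V) : Prop :=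
  S.Nonempty ∧ {v | v ∉ S ∧ (G.neighborSet v ∩ S).ncard = 1}.ncard ≤ ℓ

lemma subset_zfStep {V : Type*} (G : SimpleGraph V) (L B : Set V) :
    B ⊆ zfStep G L B := Set.subset_union_left

lemma zfStep_mono {V : Type*} (G : SimpleGraph V) (L : Set V) :
    Monotone (zfStep G L) := by
  intro A B h v hv
  rcases hv with hv | ⟨u, hu, hul, hadj, hall⟩
  · exact Or.inl (h hv)
  · exact Or.inr ⟨u, h hu, hul, hadj, fun w hw hwB => hall w hw (fun hA => hwB (h hA))⟩

lemma zfIter_mono {V : Type*} (G : SimpleGraph V) (L B : Set V) :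
    Monotone (fun k => (zfStep G L)^[k] B) := by
  apply monotone_nat_of_le_succ
  intro n
  rw [Function.iterate_succ_apply']
  exact subset_zfStep G L _

lemma subset_zfClosure {V : Type*} (G : SimpleGraph V) (L B : Set V) :
    B ⊆ zfClosure G L B := fun v hv => Set.mem_iUnion.mpr ⟨0, hv⟩

lemma iter_subset_zfClosure {V : Type*} (G : SimpleGraph V) (L B : Set V) (k : ℕ) :
    (zfStep G L)^[k] B ⊆ zfClosure G L B := fun v hv => Set.mem_iUnion.mpr ⟨k, hv⟩

lemma zfClosure_subset_of_closed {V : Type*} (G : SimpleGraph V) (L B A : Set V)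
    (hBA : B ⊆ A) (hA : zfStep G L A ⊆ A) : zfClosure G L B ⊆ A := by
  have key : ∀ k, (zfStep G L)^[k] B ⊆ A := by
    intro k
    induction k with
    | zero => exact hBA
    | succ n ih =>
      rw [Function.iterate_succ_apply']
      exact (zfStep_mono G L ih).trans hA
  intro v hv
  obtain ⟨k, hk⟩ := Set.mem_iUnion.mp hv
  exact key k hk

lemma zfStep_zfClosure_subset {V : Type*} [Fintype V] (G : SimpleGraph V) (L B : Set V) :
    zfStep G L (zfClosure G L B) ⊆ zfClosure G L B := by
  classical
  intro v hv
  rcases hv with hv | ⟨u, hu, hul, hadj, hall⟩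
  · exact hv
  · set N : ℕ := Finset.univ.sup (fun w : V =>
      if h : w ∈ zfClosure G L B then (Set.mem_iUnion.mp h).choose else 0) with hN
    have key : ∀ w, w ∈ zfClosure G L B → w ∈ (zfStep G L)^[N] B := by
      intro w hw
      have h1 : w ∈ (zfStep G L)^[(Set.mem_iUnion.mp hw).choose] B :=
        (Set.mem_iUnion.mp hw).choose_spec
      have h2 : (Set.mem_iUnion.mp hw).choose ≤ N := by
        have := Finset.le_sup (f := fun w : V =>
          if h : w ∈ zfClosure G L B then (Set.mem_iUnion.mp h).choose else 0)
          (Finset.mem_univ w)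
        rwa [dif_pos hw] at this
      exact zfIter_mono G L B h2 h1
    have : v ∈ (zfStep G L)^[N + 1] B := by
      rw [Function.iterate_succ_apply']
      exact Or.inr ⟨u, key u hu, hul, hadj,
        fun w hw hwN => hall w hw (fun hwC => hwN (key w hwC))⟩
    exact iter_subset_zfClosure G L B (N + 1) this

/-- A set `B` is an `ℓ`-leaky forcing set of a finite simple graph `G` if and
only if `B` intersects every `ℓ`-leaky fort of `G`. -/
theorem isLeakyForcingSet_iff_meets_forts {V : Type*} [Fintype V]
    (G : SimpleGraph V) (ℓ : ℕ) (B : Set V) :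
    IsLeakyForcingSet G ℓ B ↔
      ∀ S : Set V, IsLeakyFort G ℓ S → (B ∩ S).Nonempty := by
  constructor
  · intro hforce S hS
    obtain ⟨hSne, hScard⟩ := hS
    by_contra hcon
    have hBS : B ⊆ Sᶜ := by
      intro x hx hxS
      exact hcon ⟨x, hx, hxS⟩
    set L : Set V := {v | v ∉ S ∧ (G.neighborSet v ∩ S).ncard = 1} with hLdef
    have hclosed : zfStep G L Sᶜ ⊆ Sᶜ := by
      intro v hv
      rcases hv with hv | ⟨u, hu, hul, hadj, hall⟩
      · exact hv
      · intro hvS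
        apply hul
        refine ⟨hu, ?_⟩
        have : G.neighborSet u ∩ S = {v} := by
          ext w
          constructor
          · rintro ⟨hwadj, hwS⟩
            exact hall w hwadj (not_not.mpr hwS)
          · rintro rfl
            exact ⟨hadj, hvS⟩
        rw [this, Set.ncard_singleton]
    have hsub : zfClosure G L B ⊆ Sᶜ := zfClosure_subset_of_closed G L B Sᶜ hBS hclosed
    obtain ⟨s, hs⟩ := hSne
    have : s ∈ zfClosure G L B := by
      rw [hforce L hScard]; trivial
    exact hsub this hs
  · intro hmeet L hL
    by_contra hne
    set C := zfClosure G L B with hC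
    have hSne : (Cᶜ).Nonempty := Set.nonempty_compl.mpr hne
    have hfort : IsLeakyFort G ℓ Cᶜ := by
      refine ⟨hSne, ?_⟩
      have hsub : {v | v ∉ Cᶜ ∧ (G.neighborSet v ∩ Cᶜ).ncard = 1} ⊆ L := by
        rintro v ⟨hvC, hv1⟩
        rw [Set.notMem_compl_iff] at hvC
        by_contra hvL
        obtain ⟨w, hw⟩ := Set.ncard_eq_one.mp hv1
        have hwmem : w ∈ G.neighborSet v ∩ Cᶜ := by rw [hw]; rfl
        have hwC : w ∈ zfStep G L C := by
          refine Or.inr ⟨v, hvC, hvL, hwmem.1, ?_⟩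
          intro x hx hxC
          have : x ∈ G.neighborSet v ∩ Cᶜ := ⟨hx, hxC⟩
          rw [hw] at this
          exact this
        exact hwmem.2 (zfStep_zfClosure_subset G L B hwC)
      exact (Set.ncard_le_ncard hsub (Set.toFinite L)).trans hL
    obtain ⟨x, hxB, hxS⟩ := hmeet Cᶜ hfort
    exact hxS (subset_zfClosure G L B hxB)
end

section
/- For all positive integers m and n, the Hopi rectangle graphs HD(m,n) and HD(n,m) are isomorphic as graphs. -/
/-- The vertex set of the Hopi rectangle graph of order `(m,n)`: the set of
integer lattice points `(i,j)` with `m-1 ≤ i+j ≤ 2n+m-1` and `|i-j| ≤ m`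
(realized as a `Finset` by filtering a sufficiently large box). -/
noncomputable def HDverts (m n : ℕ) : Finset (ℤ × ℤ) :=
  (Finset.Icc (-2 : ℤ) (2*n + 2*m) ×ˢ Finset.Icc (-2 : ℤ) (2*n + 2*m)).filter
    (fun p => (m : ℤ) - 1 ≤ p.1 + p.2 ∧ p.1 + p.2 ≤ 2*n + m - 1 ∧ |p.1 - p.2| ≤ m)

/-- The Hopi rectangle graph `HD(m,n)`: vertices are the points of `HDverts m n`,
and `(i,j)` is adjacent to `(i',j')` iff `|i - i'| + |j - j'| = 1`. -/
def HD (m n : ℕ) : SimpleGraph {p : ℤ × ℤ // p ∈ HDverts m n} where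
  Adj u v := |u.val.1 - v.val.1| + |u.val.2 - v.val.2| = 1
  symm := by
    constructor
    intro u v h
    rw [abs_sub_comm v.val.1 u.val.1, abs_sub_comm v.val.2 u.val.2]
    exact h
  loopless := by constructor; intro u h; simp at h

lemma HDverts_swap_mem (m n : ℕ) (p : ℤ × ℤ) (hp : p ∈ HDverts m n) :
    ((p.1, (m : ℤ) + n - 1 - p.2) : ℤ × ℤ) ∈ HDverts n m := by
  simp only [HDverts, Finset.mem_filter, Finset.mem_product, Finset.mem_Icc, abs_le] at hp ⊢
  omega

def HDswapEquiv (m n : ℕ) :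
    {p : ℤ × ℤ // p ∈ HDverts m n} ≃ {p : ℤ × ℤ // p ∈ HDverts n m} where
  toFun u := ⟨(u.1.1, (m : ℤ) + n - 1 - u.1.2), HDverts_swap_mem m n u.1 u.2⟩
  invFun u := ⟨(u.1.1, (m : ℤ) + n - 1 - u.1.2), by
    have := HDverts_swap_mem n m u.1 u.2
    have h : ((n : ℤ) + m - 1 - u.1.2) = ((m : ℤ) + n - 1 - u.1.2) := by ring
    rwa [h] at this⟩
  left_inv u := by ext <;> simp
  right_inv u := by ext <;> simp

/-- `HD(m,n)` and `HD(n,m)` are isomorphic as graphs. -/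
theorem HD_iso_swap (m n : ℕ) (hm : 0 < m) (hn : 0 < n) :
    Nonempty (HD m n ≃g HD n m) := by
  refine ⟨⟨HDswapEquiv m n, ?_⟩⟩
  intro u v
  show |u.1.1 - v.1.1| + |((m : ℤ) + n - 1 - u.1.2) - ((m : ℤ) + n - 1 - v.1.2)| = 1 ↔ _
  have h : ((m : ℤ) + n - 1 - u.1.2) - ((m : ℤ) + n - 1 - v.1.2) = -(u.1.2 - v.1.2) := by ring
  rw [h, abs_neg]
  rfl
end

section
/- For all positive integers m and n, there exist m·n subgraphs H_1, …, H_{mn} of the Hopi rectangle graph HD(m,n), each isomorphic to the 4-cycle C_4, such that the edge set of HD(m,n) is the union of the edge sets of H_1, …, H_{mn}. -/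
open SimpleGraph
open SimpleGraph

lemma mem_HDverts {m n : ℕ} {x y : ℤ} :
    (x, y) ∈ HDverts m n ↔
      -2 ≤ x ∧ x ≤ 2*n + 2*m ∧ -2 ≤ y ∧ y ≤ 2*n + 2*m ∧
      (m:ℤ) - 1 ≤ x + y ∧ x + y ≤ 2*n + m - 1 ∧ ((x - y).natAbs : ℤ) ≤ m := by
  simp only [HDverts, Finset.mem_filter, Finset.mem_product, Finset.mem_Icc,
    Int.abs_eq_natAbs]
  tauto

lemma HD_adj {m n : ℕ} {u v : {p : ℤ × ℤ // p ∈ HDverts m n}} :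
    (HD m n).Adj u v ↔
      ((u.val.1 - v.val.1).natAbs : ℤ) + ((u.val.2 - v.val.2).natAbs : ℤ) = 1 := by
  show |u.val.1 - v.val.1| + |u.val.2 - v.val.2| = 1 ↔ _
  rw [Int.abs_eq_natAbs, Int.abs_eq_natAbs]

/-- The four corners of the unit square with lower-left corner `(a,b)`. -/
def sqSet (m n : ℕ) (a b : ℤ) : Set {p : ℤ × ℤ // p ∈ HDverts m n} :=
  {v | v.val = (a, b) ∨ v.val = (a+1, b) ∨ v.val = (a+1, b+1) ∨ v.val = (a, b+1)}

/-- The subgraph of `HD m n` induced on the unit square with lower-left corner `(a,b)`. -/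
def sqSub (m n : ℕ) (a b : ℤ) : (HD m n).Subgraph :=
  (⊤ : (HD m n).Subgraph).induce (sqSet m n a b)

lemma sqSub_adj {m n : ℕ} {a b : ℤ} {u v : {p : ℤ × ℤ // p ∈ HDverts m n}} :
    (sqSub m n a b).Adj u v ↔
      u ∈ sqSet m n a b ∧ v ∈ sqSet m n a b ∧ (HD m n).Adj u v := by
  simp [sqSub, SimpleGraph.Subgraph.induce_adj]

lemma sq_iso (m n : ℕ) (a b : ℤ)
    (h00 : (a, b) ∈ HDverts m n) (h10 : (a+1, b) ∈ HDverts m n)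
    (h11 : (a+1, b+1) ∈ HDverts m n) (h01 : (a, b+1) ∈ HDverts m n) :
    Nonempty ((sqSub m n a b).coe ≃g SimpleGraph.cycleGraph 4) := by
  let f : Fin 4 → ↥((sqSub m n a b).verts) := fun i =>
    match i with
    | 0 => ⟨⟨(a, b), h00⟩, Or.inl rfl⟩
    | 1 => ⟨⟨(a+1, b), h10⟩, Or.inr (Or.inl rfl)⟩
    | 2 => ⟨⟨(a+1, b+1), h11⟩, Or.inr (Or.inr (Or.inl rfl))⟩
    | 3 => ⟨⟨(a, b+1), h01⟩, Or.inr (Or.inr (Or.inr rfl))⟩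
  have hinj : Function.Injective f := by
    intro x y h
    fin_cases x <;> fin_cases y <;>
      first
      | rfl
      | (exfalso; simp only [f, Subtype.ext_iff, Prod.ext_iff] at h; omega)
  have hsurj : Function.Surjective f := by
    rintro ⟨⟨p, hp⟩, hmem⟩
    rcases hmem with h | h | h | h
    · exact ⟨0, Subtype.ext (Subtype.ext h.symm)⟩
    · exact ⟨1, Subtype.ext (Subtype.ext h.symm)⟩
    · exact ⟨2, Subtype.ext (Subtype.ext h.symm)⟩
    · exact ⟨3, Subtype.ext (Subtype.ext h.symm)⟩
  let e : Fin 4 ≃ ↥((sqSub m n a b).verts) := Equiv.ofBijective f ⟨hinj, hsurj⟩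
  have key : ∀ x y : Fin 4,
      (sqSub m n a b).coe.Adj (f x) (f y) ↔ (SimpleGraph.cycleGraph 4).Adj x y := by
    intro x y
    fin_cases x <;> fin_cases y <;>
      · simp only [f, Subgraph.coe_adj, sqSub_adj, HD_adj, sqSet, Set.mem_setOf_eq,
          Prod.mk.injEq]
        constructor
        · rintro ⟨-, -, h⟩
          first | decide | omega
        · intro h
          first
          | exact absurd h (by decide)
          | exact ⟨by simp, by simp, by omega⟩
  refine ⟨⟨e.symm, ?_⟩⟩
  intro u v
  rw [← key (e.symm u) (e.symm v)]
  have hu : f (e.symm u) = u := e.apply_symm_apply u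
  have hv : f (e.symm v) = v := e.apply_symm_apply v
  rw [hu, hv]

lemma corner_mem (m n : ℕ) (t r : ℕ) (ht : t < n) (hr : r < m) (x y : ℤ)
    (hx : x = (t:ℤ) + r ∨ x = (t:ℤ) + r + 1)
    (hy : y = (m:ℤ) - 1 + t - r ∨ y = (m:ℤ) - 1 + t - r + 1) :
    (x, y) ∈ HDverts m n := by
  rw [mem_HDverts]; omega

lemma cover_aux (m n : ℕ) (hm : 0 < m) (hn : 0 < n)
    (u v : {p : ℤ × ℤ // p ∈ HDverts m n})
    (hcase : (v.val.1 = u.val.1 + 1 ∧ v.val.2 = u.val.2) ∨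
             (v.val.1 = u.val.1 ∧ v.val.2 = u.val.2 + 1)) :
    ∃ t r : ℕ, t < n ∧ r < m ∧
      (sqSub m n ((t:ℤ) + r) ((m:ℤ) - 1 + t - r)).Adj u v := by
  obtain ⟨⟨i, j⟩, hu0⟩ := u
  obtain ⟨⟨i', j'⟩, hv0⟩ := v
  dsimp only at hcase
  have hu1 := mem_HDverts.mp hu0
  have hv1 := mem_HDverts.mp hv0
  have hadj : (HD m n).Adj ⟨(i, j), hu0⟩ ⟨(i', j'), hv0⟩ := by
    rw [HD_adj]
    show ((i - i').natAbs : ℤ) + ((j - j').natAbs : ℤ) = 1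
    omega
  rcases hcase with ⟨h1, h2⟩ | ⟨h1, h2⟩
  · -- horizontal edge
    by_cases hpar : (i + j - m) % 2 = 1
    · obtain ⟨T, hT⟩ : ∃ T : ℤ, i + j - (m:ℤ) + 1 = 2 * T := ⟨(i + j - m + 1) / 2, by omega⟩
      obtain ⟨R, hR⟩ : ∃ R : ℤ, i - j + (m:ℤ) - 1 = 2 * R := ⟨(i - j + m - 1) / 2, by omega⟩
      refine ⟨T.toNat, R.toNat, by omega, by omega, ?_⟩
      rw [sqSub_adj]
      refine ⟨Or.inl ?_, Or.inr (Or.inl ?_), hadj⟩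
      · show ((i : ℤ), (j : ℤ)) = _
        rw [Prod.mk.injEq]
        exact ⟨by omega, by omega⟩
      · show ((i' : ℤ), (j' : ℤ)) = _
        rw [Prod.mk.injEq]
        exact ⟨by omega, by omega⟩
    · obtain ⟨T, hT⟩ : ∃ T : ℤ, i + j - (m:ℤ) = 2 * T := ⟨(i + j - m) / 2, by omega⟩
      obtain ⟨R, hR⟩ : ∃ R : ℤ, i - j + (m:ℤ) = 2 * R := ⟨(i - j + m) / 2, by omega⟩
      refine ⟨T.toNat, R.toNat, by omega, by omega, ?_⟩
      rw [sqSub_adj]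
      refine ⟨Or.inr (Or.inr (Or.inr ?_)), Or.inr (Or.inr (Or.inl ?_)), hadj⟩
      · show ((i : ℤ), (j : ℤ)) = _
        rw [Prod.mk.injEq]
        exact ⟨by omega, by omega⟩
      · show ((i' : ℤ), (j' : ℤ)) = _
        rw [Prod.mk.injEq]
        exact ⟨by omega, by omega⟩
  · -- vertical edge
    by_cases hpar : (i + j - m) % 2 = 1
    · obtain ⟨T, hT⟩ : ∃ T : ℤ, i + j - (m:ℤ) + 1 = 2 * T := ⟨(i + j - m + 1) / 2, by omega⟩
      obtain ⟨R, hR⟩ : ∃ R : ℤ, i - j + (m:ℤ) - 1 = 2 * R := ⟨(i - j + m - 1) / 2, by omega⟩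
      refine ⟨T.toNat, R.toNat, by omega, by omega, ?_⟩
      rw [sqSub_adj]
      refine ⟨Or.inl ?_, Or.inr (Or.inr (Or.inr ?_)), hadj⟩
      · show ((i : ℤ), (j : ℤ)) = _
        rw [Prod.mk.injEq]
        exact ⟨by omega, by omega⟩
      · show ((i' : ℤ), (j' : ℤ)) = _
        rw [Prod.mk.injEq]
        exact ⟨by omega, by omega⟩
    · obtain ⟨T, hT⟩ : ∃ T : ℤ, i + j - (m:ℤ) = 2 * T := ⟨(i + j - m) / 2, by omega⟩
      obtain ⟨R, hR⟩ : ∃ R : ℤ, i - j + (m:ℤ) - 2 = 2 * R := ⟨(i - j + m - 2) / 2, by omega⟩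
      refine ⟨T.toNat, R.toNat, by omega, by omega, ?_⟩
      rw [sqSub_adj]
      refine ⟨Or.inr (Or.inl ?_), Or.inr (Or.inr (Or.inl ?_)), hadj⟩
      · show ((i : ℤ), (j : ℤ)) = _
        rw [Prod.mk.injEq]
        exact ⟨by omega, by omega⟩
      · show ((i' : ℤ), (j' : ℤ)) = _
        rw [Prod.mk.injEq]
        exact ⟨by omega, by omega⟩

lemma cover_index (m n : ℕ) (hm : 0 < m) (hn : 0 < n)
    (u v : {p : ℤ × ℤ // p ∈ HDverts m n})
    (hcase : (v.val.1 = u.val.1 + 1 ∧ v.val.2 = u.val.2) ∨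
             (v.val.1 = u.val.1 ∧ v.val.2 = u.val.2 + 1)) :
    ∃ k : Fin (m * n),
      (sqSub m n (((k.val / m : ℕ) : ℤ) + ((k.val % m : ℕ) : ℤ))
        ((m:ℤ) - 1 + ((k.val / m : ℕ) : ℤ) - ((k.val % m : ℕ) : ℤ))).Adj u v := by
  obtain ⟨t, r, ht, hr, hadj⟩ := cover_aux m n hm hn u v hcase
  have hK : m * t + r < m * n := by
    calc m * t + r < m * (t + 1) := by rw [Nat.mul_succ]; omega
      _ ≤ m * n := Nat.mul_le_mul_left m ht
  refine ⟨⟨m * t + r, hK⟩, ?_⟩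
  have e1 : (m * t + r) / m = t := by
    rw [Nat.mul_add_div hm, Nat.div_eq_of_lt hr]; omega
  have e2 : (m * t + r) % m = r := by
    rw [Nat.mul_add_mod, Nat.mod_eq_of_lt hr]
  show (sqSub m n ((((m * t + r) / m : ℕ) : ℤ) + (((m * t + r) % m : ℕ) : ℤ))
      ((m:ℤ) - 1 + (((m * t + r) / m : ℕ) : ℤ) - (((m * t + r) % m : ℕ) : ℤ))).Adj _ _
  rw [e1, e2]
  exact hadj

/-- There are `m · n` subgraphs of `HD(m,n)`, each isomorphic to the cycle
`C₄`, whose edge sets cover the edge set of `HD(m,n)`. -/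
theorem HD_edge_cover_by_C4 (m n : ℕ) (hm : 0 < m) (hn : 0 < n) :
    ∃ H : Fin (m * n) → (HD m n).Subgraph,
      (∀ i, Nonempty ((H i).coe ≃g SimpleGraph.cycleGraph 4)) ∧
      (⋃ i, (H i).edgeSet) = (HD m n).edgeSet := by
  refine ⟨fun k => sqSub m n (((k.val / m : ℕ) : ℤ) + ((k.val % m : ℕ) : ℤ))
      ((m:ℤ) - 1 + ((k.val / m : ℕ) : ℤ) - ((k.val % m : ℕ) : ℤ)), ?_, ?_⟩
  · intro k
    have ht : k.val / m < n :=
      (Nat.div_lt_iff_lt_mul hm).mpr (lt_of_lt_of_eq k.isLt (Nat.mul_comm m n))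
    have hr : k.val % m < m := Nat.mod_lt _ hm
    exact sq_iso m n _ _
      (corner_mem m n _ _ ht hr _ _ (Or.inl rfl) (Or.inl rfl))
      (corner_mem m n _ _ ht hr _ _ (Or.inr rfl) (Or.inl rfl))
      (corner_mem m n _ _ ht hr _ _ (Or.inr rfl) (Or.inr rfl))
      (corner_mem m n _ _ ht hr _ _ (Or.inl rfl) (Or.inr rfl))
  · ext e
    refine Sym2.ind (fun u v => ?_) e
    simp only [Set.mem_iUnion, SimpleGraph.Subgraph.mem_edgeSet, SimpleGraph.mem_edgeSet]
    constructor
    · rintro ⟨k, hk⟩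
      exact hk.adj_sub
    · intro h
      have h' := HD_adj.mp h
      have hcases : (v.val.1 = u.val.1 + 1 ∧ v.val.2 = u.val.2) ∨
          (v.val.1 = u.val.1 ∧ v.val.2 = u.val.2 + 1) ∨
          (u.val.1 = v.val.1 + 1 ∧ u.val.2 = v.val.2) ∨
          (u.val.1 = v.val.1 ∧ u.val.2 = v.val.2 + 1) := by omega
      rcases hcases with hc | hc | hc | hc
      · exact cover_index m n hm hn u v (Or.inl hc)
      · exact cover_index m n hm hn u v (Or.inr hc)
      · obtain ⟨k, hk⟩ := cover_index m n hm hn v u (Or.inl hc)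
        exact ⟨k, hk.symm⟩
      · obtain ⟨k, hk⟩ := cover_index m n hm hn v u (Or.inr hc)
        exact ⟨k, hk.symm⟩
end

section
/- For all positive integers m and n, the 2-leaky forcing number of the Hopi rectangle graph HD(m,n) is at least 2(m + n), i.e., 2(m+n) ≤ Z_{(2)}(HD(m,n)). -/
section Aux

lemma aux_adj_cases (a b : ℤ) (h : |a| + |b| = 1) :
    (a = 1 ∧ b = 0) ∨ (a = -1 ∧ b = 0) ∨ (a = 0 ∧ b = 1) ∨ (a = 0 ∧ b = -1) := by
  rcases abs_cases a with ⟨h1, _⟩ | ⟨h1, _⟩ <;> rcases abs_cases b with ⟨h2, _⟩ | ⟨h2, _⟩ <;> omega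

/-- A vertex whose neighborhood has at most two vertices must belong to every
2-leaky forcing set. -/
lemma aux_mem_of_leaky {V : Type*} (G : SimpleGraph V) (B : Set V)
    (hB : IsLeakyForcingSet G 2 B) (v : V)
    (h2 : {w | G.Adj v w}.ncard ≤ 2) : v ∈ B := by
  have hcl := hB {w | G.Adj v w} h2
  have hv : v ∈ zfClosure G {w | G.Adj v w} B := by rw [hcl]; trivial
  obtain ⟨k, hk⟩ := Set.mem_iUnion.1 hv
  clear hv hcl
  induction k with
  | zero => exact hk
  | succ k ih =>
    rw [Function.iterate_succ_apply'] at hk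
    rcases (Set.mem_union _ _ _).mp hk with hk | ⟨u, _, huL, hadj, _⟩
    · exact ih hk
    · exact absurd (G.adj_symm hadj) huL

lemma aux_univ_leaky {V : Type*} (G : SimpleGraph V) (ℓ : ℕ) :
    IsLeakyForcingSet G ℓ (Set.univ : Set V) := by
  intro L _
  apply Set.eq_univ_of_univ_subset
  intro x hx
  exact Set.mem_iUnion.2 ⟨0, hx⟩

/-- Key bound: if every neighbor of `v` in `HD m n` has value `a` or `b`, then the
neighborhood of `v` has at most two elements. -/
lemma aux_nbr_le_two (m n : ℕ) (v : {p : ℤ × ℤ // p ∈ HDverts m n}) (a b : ℤ × ℤ)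
    (h : ∀ w1 w2 : ℤ, (m : ℤ) - 1 ≤ w1 + w2 → w1 + w2 ≤ 2 * n + m - 1 →
      -(m : ℤ) ≤ w1 - w2 → w1 - w2 ≤ m →
      ((w1 = v.val.1 + 1 ∧ w2 = v.val.2) ∨ (w1 = v.val.1 - 1 ∧ w2 = v.val.2) ∨
        (w1 = v.val.1 ∧ w2 = v.val.2 + 1) ∨ (w1 = v.val.1 ∧ w2 = v.val.2 - 1)) →
      (w1, w2) = a ∨ (w1, w2) = b) :
    {w | (HD m n).Adj v w}.ncard ≤ 2 := by
  have himg : Subtype.val '' {w | (HD m n).Adj v w} ⊆ {a, b} := by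
    rintro p ⟨w, hw, rfl⟩
    have hadj : |v.val.1 - w.val.1| + |v.val.2 - w.val.2| = 1 := hw
    have hmem := w.property
    simp only [HDverts, Finset.mem_filter, Finset.mem_product, Finset.mem_Icc, abs_le] at hmem
    obtain ⟨-, h1, h2, h3, h4⟩ := hmem
    have hcand := aux_adj_cases _ _ hadj
    have hres := h w.val.1 w.val.2 h1 h2 h3 h4 (by omega)
    simpa [Set.mem_insert_iff] using hres
  calc {w | (HD m n).Adj v w}.ncard
      = (Subtype.val '' {w | (HD m n).Adj v w}).ncard :=
        (Set.ncard_image_of_injective _ Subtype.val_injective).symm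
    _ ≤ ({a, b} : Set (ℤ × ℤ)).ncard :=
        Set.ncard_le_ncard himg ((Set.finite_singleton b).insert a)
    _ ≤ 2 := by
        calc ({a, b} : Set (ℤ × ℤ)).ncard ≤ ({b} : Set (ℤ × ℤ)).ncard + 1 :=
              Set.ncard_insert_le a {b}
          _ ≤ 2 := by rw [Set.ncard_singleton]

lemma aux_nbr_bound (m n : ℕ) (v : {p : ℤ × ℤ // p ∈ HDverts m n})
    (hcase : v.val.1 + v.val.2 = (m : ℤ) - 1 ∨ v.val.1 + v.val.2 = 2 * n + m - 1 ∨
      v.val.1 - v.val.2 = (m : ℤ) ∨ v.val.2 - v.val.1 = (m : ℤ)) :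
    {w | (HD m n).Adj v w}.ncard ≤ 2 := by
  rcases hcase with hc | hc | hc | hc
  · exact aux_nbr_le_two m n v (v.val.1 + 1, v.val.2) (v.val.1, v.val.2 + 1)
      (by intro w1 w2 c1 c2 c3 c4 hc5; simp only [Prod.mk.injEq]; omega)
  · exact aux_nbr_le_two m n v (v.val.1 - 1, v.val.2) (v.val.1, v.val.2 - 1)
      (by intro w1 w2 c1 c2 c3 c4 hc5; simp only [Prod.mk.injEq]; omega)
  · exact aux_nbr_le_two m n v (v.val.1 - 1, v.val.2) (v.val.1, v.val.2 + 1)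
      (by intro w1 w2 c1 c2 c3 c4 hc5; simp only [Prod.mk.injEq]; omega)
  · exact aux_nbr_le_two m n v (v.val.1 + 1, v.val.2) (v.val.1, v.val.2 - 1)
      (by intro w1 w2 c1 c2 c3 c4 hc5; simp only [Prod.mk.injEq]; omega)

/-- The set of degree-two boundary vertices of `HD(m,n)`. -/
def auxS (m n : ℕ) : Finset (ℤ × ℤ) :=
  ((Finset.range m).image (fun i : ℕ => ((i : ℤ), (m : ℤ) - 1 - i)) ∪
    (Finset.range m).image (fun i : ℕ => ((n : ℤ) + i, (n : ℤ) + m - 1 - i))) ∪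
  ((Finset.range n).image (fun j : ℕ => ((j : ℤ) + m, (j : ℤ))) ∪
    (Finset.range n).image (fun i : ℕ => ((i : ℤ), (i : ℤ) + m)))

lemma auxS_card (m n : ℕ) (hm : 0 < m) (hn : 0 < n) : (auxS m n).card = 2 * (m + n) := by
  have i1 : Function.Injective (fun i : ℕ => ((i : ℤ), (m : ℤ) - 1 - i)) := by
    intro a b h; have := congrArg Prod.fst h; simpa using this
  have i2 : Function.Injective (fun i : ℕ => ((n : ℤ) + i, (n : ℤ) + m - 1 - i)) := by
    intro a b h; have := congrArg Prod.fst h; simp at this; exact_mod_cast this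
  have i3 : Function.Injective (fun j : ℕ => ((j : ℤ) + m, (j : ℤ))) := by
    intro a b h; have := congrArg Prod.snd h; simpa using this
  have i4 : Function.Injective (fun i : ℕ => ((i : ℤ), (i : ℤ) + m)) := by
    intro a b h; have := congrArg Prod.fst h; simpa using this
  have d12 : Disjoint ((Finset.range m).image (fun i : ℕ => ((i : ℤ), (m : ℤ) - 1 - i)))
      ((Finset.range m).image (fun i : ℕ => ((n : ℤ) + i, (n : ℤ) + m - 1 - i))) := by
    simp only [Finset.disjoint_left, Finset.mem_image, Finset.mem_range]
    rintro p ⟨a, ha, rfl⟩ ⟨b, hb, hab⟩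
    simp only [Prod.mk.injEq] at hab
    omega
  have d34 : Disjoint ((Finset.range n).image (fun j : ℕ => ((j : ℤ) + m, (j : ℤ))))
      ((Finset.range n).image (fun i : ℕ => ((i : ℤ), (i : ℤ) + m))) := by
    simp only [Finset.disjoint_left, Finset.mem_image, Finset.mem_range]
    rintro p ⟨a, ha, rfl⟩ ⟨b, hb, hab⟩
    simp only [Prod.mk.injEq] at hab
    omega
  have dU : Disjoint (((Finset.range m).image (fun i : ℕ => ((i : ℤ), (m : ℤ) - 1 - i)) ∪
      (Finset.range m).image (fun i : ℕ => ((n : ℤ) + i, (n : ℤ) + m - 1 - i))))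
      (((Finset.range n).image (fun j : ℕ => ((j : ℤ) + m, (j : ℤ))) ∪
      (Finset.range n).image (fun i : ℕ => ((i : ℤ), (i : ℤ) + m)))) := by
    simp only [Finset.disjoint_left, Finset.mem_union, Finset.mem_image, Finset.mem_range]
    rintro p (⟨a, ha, rfl⟩ | ⟨a, ha, rfl⟩) (⟨b, hb, hab⟩ | ⟨b, hb, hab⟩) <;>
      simp only [Prod.mk.injEq] at hab <;> omega
  rw [auxS, Finset.card_union_of_disjoint dU, Finset.card_union_of_disjoint d12,
    Finset.card_union_of_disjoint d34, Finset.card_image_of_injective _ i1,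
    Finset.card_image_of_injective _ i2, Finset.card_image_of_injective _ i3,
    Finset.card_image_of_injective _ i4, Finset.card_range, Finset.card_range]
  ring

lemma auxS_subset (m n : ℕ) (hm : 0 < m) (hn : 0 < n) :
    ∀ p ∈ auxS m n, p ∈ HDverts m n := by
  intro p hp
  simp only [auxS, Finset.mem_union, Finset.mem_image, Finset.mem_range] at hp
  simp only [HDverts, Finset.mem_filter, Finset.mem_product, Finset.mem_Icc, abs_le]
  rcases hp with (⟨a, ha, rfl⟩ | ⟨a, ha, rfl⟩) | (⟨a, ha, rfl⟩ | ⟨a, ha, rfl⟩)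
  all_goals omega

lemma auxS_case (m n : ℕ) (v : {p : ℤ × ℤ // p ∈ HDverts m n}) (hv : v.val ∈ auxS m n) :
    v.val.1 + v.val.2 = (m : ℤ) - 1 ∨ v.val.1 + v.val.2 = 2 * n + m - 1 ∨
      v.val.1 - v.val.2 = (m : ℤ) ∨ v.val.2 - v.val.1 = (m : ℤ) := by
  simp only [auxS, Finset.mem_union, Finset.mem_image, Finset.mem_range] at hv
  rcases hv with (⟨a, ha, hav⟩ | ⟨a, ha, hav⟩) | (⟨a, ha, hav⟩ | ⟨a, ha, hav⟩) <;>
    rw [← hav] <;> simp <;> omega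

end Aux

/-- The `2`-leaky forcing number of `HD(m,n)` is at least `2(m + n)`. -/
theorem two_leaky_HD_ge (m n : ℕ) (hm : 0 < m) (hn : 0 < n) :
    2 * (m + n) ≤ leakyNumber (HD m n) 2 := by
  apply le_csInf
  · exact ⟨(Set.univ : Set {p : ℤ × ℤ // p ∈ HDverts m n}).ncard,
      Set.univ, aux_univ_leaky _ _, rfl⟩
  · rintro x ⟨B, hB, rfl⟩
    have hsub : {v : {p : ℤ × ℤ // p ∈ HDverts m n} | v.val ∈ auxS m n} ⊆ B := by
      intro v hv
      exact aux_mem_of_leaky (HD m n) B hB v (aux_nbr_bound m n v (auxS_case m n v hv))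
    have himg : Subtype.val '' {v : {p : ℤ × ℤ // p ∈ HDverts m n} | v.val ∈ auxS m n}
        = (auxS m n : Set (ℤ × ℤ)) := by
      ext p
      constructor
      · rintro ⟨w, hw, rfl⟩; exact hw
      · intro hp
        exact ⟨⟨p, auxS_subset m n hm hn p hp⟩, hp, rfl⟩
    calc 2 * (m + n) = (auxS m n).card := (auxS_card m n hm hn).symm
      _ = ((auxS m n : Set (ℤ × ℤ))).ncard := (Set.ncard_coe_finset _).symm
      _ = {v : {p : ℤ × ℤ // p ∈ HDverts m n} | v.val ∈ auxS m n}.ncard := by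
          rw [← himg, Set.ncard_image_of_injective _ Subtype.val_injective]
      _ ≤ B.ncard := Set.ncard_le_ncard hsub (Set.toFinite B)
end
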